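/- Let C_{2n+1} be an odd cycle graph on vertex set V = {x_1,...,x_{2n+1}}. Then the colon ideal (J(C_{2n+1})^2 : x_V) equals the maximal ideal p_V = (x_1,...,x_{2n+1}), where x_V is the product of all vertices. -/

import Mathlib

open MvPolynomial

noncomputable section

/-- A finite simple hypergraph on a vertex set `V`: edges are nonempty subsets of `V`
forming an antichain (a clutter). -/
structure Hypergraph' (σ : Type*) where
  V : Finset σ
  E : Finset (Finset σ)
  edge_sub : ∀ e ∈ E, e ⊆ V
  edge_nonempty : ∀ e ∈ E, e.Nonempty
  simple : ∀ e ∈ E, ∀ f ∈ E, e ⊆ f → e = f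

/-- The prime ideal generated by the variables indexed by `e`. -/
def primeOf {σ : Type*} (K : Type*) [Field K] (e : Finset σ) : Ideal (MvPolynomial σ K) :=
  Ideal.span ((fun i => (X i : MvPolynomial σ K)) '' e)

/-- The cover ideal of a set of edges: the intersection of the edge primes. -/
def coverIdeal {σ : Type*} (K : Type*) [Field K] (E : Finset (Finset σ)) :
    Ideal (MvPolynomial σ K) :=
  ⨅ e ∈ E, primeOf K e

/-- The squarefree monomial supported on `T`. -/
def xU {σ : Type*} (K : Type*) [Field K] (T : Finset σ) : MvPolynomial σ K :=
  ∏ i ∈ T, X i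

/-- The edge set of the cycle graph on `Fin (2n+1)` (with cyclic successor edges). -/
def cycleEdges (n : ℕ) : Finset (Finset (Fin (2 * n + 1))) :=
  Finset.univ.image (fun i => ({i, i + 1} : Finset (Fin (2 * n + 1))))


lemma cover_card (n : ℕ) (S : Finset (Fin (2*n+1))) (h : ∀ i : Fin (2*n+1), i ∈ S ∨ i + 1 ∈ S) :
    n + 1 ≤ S.card := by
  classical
  have key : (Finset.univ : Finset (Fin (2*n+1))).card ≤ (S ×ˢ (Finset.univ : Finset Bool)).card := by
    apply Finset.card_le_card_of_injOn
      (fun i => if i ∈ S then ((i, true) : Fin (2*n+1) × Bool) else (i+1, false))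
    · intro i _
      by_cases hi : i ∈ S
      · simp [hi]
      · have := (h i).resolve_left hi
        simp [hi, this]
    · intro i _ j _ hij
      by_cases hi : i ∈ S <;> by_cases hj : j ∈ S <;> simp [hi, hj] at hij
      · exact hij
      · exact hij
  rw [Finset.card_univ, Fintype.card_fin, Finset.card_product, Finset.card_univ] at key
  simp only [Fintype.card_bool] at key
  omega

lemma cover_mem {K : Type*} [Field K] {n : ℕ} (C : Finset (Fin (2*n+1)))
    (h : ∀ i : Fin (2*n+1), i ∈ C ∨ i + 1 ∈ C) : xU K C ∈ coverIdeal K (cycleEdges n) := by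
  rw [coverIdeal, Ideal.mem_iInf]
  intro e
  rw [Ideal.mem_iInf]
  intro he
  obtain ⟨i, -, rfl⟩ := Finset.mem_image.mp he
  rw [primeOf]
  rcases h i with hi | hi
  · rw [xU, ← Finset.mul_prod_erase _ _ hi]
    exact Ideal.mul_mem_right _ _ (Ideal.subset_span ⟨i, by simp, rfl⟩)
  · rw [xU, ← Finset.mul_prod_erase _ _ hi]
    exact Ideal.mul_mem_right _ _ (Ideal.subset_span ⟨i+1, by simp, rfl⟩)

lemma val_one' {n : ℕ} (hn : 0 < n) : ((1 : Fin (2*n+1)) : ℕ) = 1 := by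
  have : 1 < 2*n+1 := by omega
  simp [Fin.val_one', Nat.mod_eq_of_lt this]

lemma val_add_one {n : ℕ} (hn : 0 < n) (i : Fin (2*n+1)) :
    ((i + 1 : Fin (2*n+1)) : ℕ) = (i.val + 1) % (2*n+1) := by
  rw [Fin.add_def, val_one' hn]

def evensC (n : ℕ) : Finset (Fin (2*n+1)) := Finset.univ.filter (fun i => Even i.val)
def oddsC (n : ℕ) : Finset (Fin (2*n+1)) := insert 0 (Finset.univ.filter (fun i => Odd i.val))

lemma evensC_cover {n : ℕ} (hn : 0 < n) (i : Fin (2*n+1)) :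
    i ∈ evensC n ∨ i + 1 ∈ evensC n := by
  rcases Nat.even_or_odd i.val with he | ho
  · exact Or.inl (by simp [evensC, he])
  · right
    have hlt : i.val < 2*n+1 := i.isLt
    have : i.val ≠ 2*n := by
      rintro h
      rw [h] at ho
      exact (Nat.not_odd_iff_even.mpr ⟨n, by ring⟩) ho
    have h1 : i.val + 1 < 2*n+1 := by omega
    simp only [evensC, Finset.mem_filter, Finset.mem_univ, true_and]
    rw [val_add_one hn, Nat.mod_eq_of_lt h1]
    exact Odd.add_one ho

lemma oddsC_cover {n : ℕ} (hn : 0 < n) (i : Fin (2*n+1)) :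
    i ∈ oddsC n ∨ i + 1 ∈ oddsC n := by
  rcases Nat.even_or_odd i.val with he | ho
  · right
    by_cases h2n : i.val = 2*n
    · have : i + 1 = 0 := by
        apply Fin.ext
        rw [val_add_one hn, h2n]
        simp
      rw [this]
      exact Finset.mem_insert_self _ _
    · have h1 : i.val + 1 < 2*n+1 := by omega
      apply Finset.mem_insert_of_mem
      simp only [Finset.mem_filter, Finset.mem_univ, true_and]
      rw [val_add_one hn, Nat.mod_eq_of_lt h1]
      exact Even.add_one he
  · exact Or.inl (Finset.mem_insert_of_mem (by simp [ho]))

lemma evensC_union_oddsC (n : ℕ) : evensC n ∪ oddsC n = Finset.univ := by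
  ext i
  simp only [Finset.mem_union, Finset.mem_univ, iff_true, evensC, oddsC, Finset.mem_insert,
    Finset.mem_filter, Finset.mem_univ, true_and]
  rcases Nat.even_or_odd i.val with he | ho
  · exact Or.inl he
  · exact Or.inr (Or.inr ho)

lemma evensC_inter_oddsC (n : ℕ) : evensC n ∩ oddsC n = {0} := by
  ext i
  simp only [Finset.mem_inter, Finset.mem_singleton, evensC, oddsC, Finset.mem_insert,
    Finset.mem_filter, Finset.mem_univ, true_and]
  constructor
  · rintro ⟨he, rfl | ho⟩
    · rfl
    · exact absurd he (Nat.not_even_iff_odd.mpr ho)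
  · rintro rfl
    exact ⟨by simp, Or.inl rfl⟩

lemma shift_cover {n : ℕ} (j : Fin (2*n+1)) (C : Finset (Fin (2*n+1)))
    (h : ∀ i : Fin (2*n+1), i ∈ C ∨ i + 1 ∈ C) (i : Fin (2*n+1)) :
    i ∈ C.image (fun a => j + a) ∨ i + 1 ∈ C.image (fun a => j + a) := by
  rcases h (i - j) with hc | hc
  · exact Or.inl (Finset.mem_image.mpr ⟨i - j, hc, by abel⟩)
  · refine Or.inr (Finset.mem_image.mpr ⟨i - j + 1, hc, ?_⟩)
    rw [← add_assoc]
    congr 1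
    abel

lemma Xj_mul_mem {K : Type*} [Field K] {n : ℕ} (hn : 0 < n) (j : Fin (2*n+1)) :
    X j * xU K (Finset.univ : Finset (Fin (2*n+1))) ∈ (coverIdeal K (cycleEdges n)) ^ 2 := by
  classical
  have hinj : Function.Injective (fun a : Fin (2*n+1) => j + a) := fun a b => by
    simp only [add_right_inj, imp_self]
  set A := (evensC n).image (fun a => j + a) with hA
  set B := (oddsC n).image (fun a => j + a) with hB
  have hunion : A ∪ B = Finset.univ := by
    rw [hA, hB, ← Finset.image_union, evensC_union_oddsC]
    exact Finset.image_univ_of_surjective (fun i => ⟨i - j, by abel⟩)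
  have hinter : A ∩ B = {j} := by
    rw [hA, hB, ← Finset.image_inter _ _ hinj, evensC_inter_oddsC, Finset.image_singleton, add_zero]
  have hprod : X j * xU K (Finset.univ : Finset (Fin (2*n+1))) = xU K A * xU K B := by
    have key := Finset.prod_union_inter (s₁ := A) (s₂ := B)
      (f := fun i => (X i : MvPolynomial (Fin (2*n+1)) K))
    rw [hunion, hinter, Finset.prod_singleton] at key
    rw [xU, xU, xU]
    exact (mul_comm _ _).trans key
  rw [hprod, pow_two]
  exact Ideal.mul_mem_mul
    (cover_mem A (shift_cover j _ (evensC_cover hn)))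
    (cover_mem B (shift_cover j _ (oddsC_cover hn)))

lemma aeval_coverIdeal_mem {K : Type*} [Field K] {n : ℕ} {f : MvPolynomial (Fin (2*n+1)) K}
    (hf : f ∈ coverIdeal K (cycleEdges n)) :
    aeval (fun _ : Fin (2*n+1) => (Polynomial.X : Polynomial K)) f ∈
      Ideal.span {(Polynomial.X : Polynomial K) ^ (n+1)} := by
  classical
  have hsupp : ∀ m ∈ f.support, n + 1 ≤ (m.support.card) := by
    intro m hm
    apply cover_card
    intro i
    have hmem : f ∈ primeOf K ({i, i+1} : Finset (Fin (2*n+1))) := by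
      have h1 : ({i, i+1} : Finset (Fin (2*n+1))) ∈ cycleEdges n :=
        Finset.mem_image.mpr ⟨i, Finset.mem_univ i, rfl⟩
      simpa using (Ideal.mem_iInf.mp ((Ideal.mem_iInf.mp hf) _) h1)
    rw [primeOf] at hmem
    obtain ⟨j, hj, hjm⟩ := mem_ideal_span_X_image.mp hmem m hm
    rw [Finset.mem_coe, Finset.mem_insert, Finset.mem_singleton] at hj
    rcases hj with rfl | rfl
    · exact Or.inl (Finsupp.mem_support_iff.mpr hjm)
    · exact Or.inr (Finsupp.mem_support_iff.mpr hjm)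
  rw [aeval_def, eval₂_eq]
  apply Ideal.sum_mem
  intro d hd
  apply Ideal.mul_mem_left
  rw [Finset.prod_pow_eq_pow_sum, Ideal.mem_span_singleton]
  refine pow_dvd_pow _ ((hsupp d hd).trans ?_)
  calc d.support.card = ∑ i ∈ d.support, 1 := by simp
    _ ≤ ∑ i ∈ d.support, d i := Finset.sum_le_sum (fun i hi => Nat.one_le_iff_ne_zero.mpr (Finsupp.mem_support_iff.mp hi))

lemma xV_not_mem_sq (K : Type*) [Field K] (n : ℕ) :
    xU K (Finset.univ : Finset (Fin (2*n+1))) ∉ (coverIdeal K (cycleEdges n)) ^ 2 := by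
  intro hmem
  set φ : MvPolynomial (Fin (2*n+1)) K →+* Polynomial K :=
    (aeval (fun _ : Fin (2*n+1) => (Polynomial.X : Polynomial K))).toRingHom with hφ
  have hJ : Ideal.map φ (coverIdeal K (cycleEdges n)) ≤
      Ideal.span {(Polynomial.X : Polynomial K) ^ (n+1)} := by
    rw [Ideal.map_le_iff_le_comap]
    intro f hf
    exact aeval_coverIdeal_mem hf
  have h2 : φ (xU K Finset.univ) ∈ Ideal.span {(Polynomial.X : Polynomial K) ^ (2*n+2)} := by
    have : φ (xU K Finset.univ) ∈ Ideal.map φ ((coverIdeal K (cycleEdges n)) ^ 2) :=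
      Ideal.mem_map_of_mem _ hmem
    rw [Ideal.map_pow, pow_two] at this
    have := Ideal.mul_mono hJ hJ this
    rw [Ideal.span_singleton_mul_span_singleton, ← pow_add] at this
    have h22 : n + 1 + (n + 1) = 2*n+2 := by omega
    rwa [h22] at this
  have hx : φ (xU K Finset.univ) = (Polynomial.X : Polynomial K) ^ (2*n+1) := by
    simp [hφ, xU, map_prod]
  rw [hx, Ideal.mem_span_singleton, Polynomial.X_pow_dvd_iff] at h2
  have := h2 (2*n+1) (by omega)
  simp at this

lemma primeOf_univ_maximal (K : Type*) [Field K] (n : ℕ) :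
    (primeOf K (Finset.univ : Finset (Fin (2*n+1)))).IsMaximal := by
  have hker : primeOf K (Finset.univ : Finset (Fin (2*n+1))) =
      RingHom.ker (constantCoeff : MvPolynomial (Fin (2*n+1)) K →+* K) := by
    apply le_antisymm
    · rw [primeOf, Ideal.span_le]
      rintro p ⟨j, -, rfl⟩
      simp [RingHom.mem_ker]
    · intro f hf
      rw [RingHom.mem_ker] at hf
      rw [primeOf]
      apply mem_ideal_span_X_image.mpr
      intro m hm
      have hm0 : m ≠ 0 := by
        rintro rfl
        rw [mem_support_iff] at hm
        exact hm (by simpa [constantCoeff_eq] using hf)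
      obtain ⟨i, hi⟩ := Finsupp.ne_iff.mp hm0
      exact ⟨i, by simp, by simpa using hi⟩
  rw [hker]
  exact RingHom.ker_isMaximal_of_surjective _ (fun c => ⟨C c, by simp⟩)

/-- For the odd cycle `C_{2n+1}`, `(J(C_{2n+1})^2 : x_V) = p_V`,
the maximal ideal generated by all the variables. -/
theorem colon_sq_coverIdeal_oddCycle (K : Type*) [Field K] (n : ℕ) (hn : 0 < n) :
    ((coverIdeal K (cycleEdges n)) ^ 2).colon
        (Ideal.span {xU K (Finset.univ : Finset (Fin (2 * n + 1)))}) =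
      primeOf K (Finset.univ : Finset (Fin (2 * n + 1))) := by
  symm
  apply (primeOf_univ_maximal K n).eq_of_le
  · intro htop
    have h1 : (1 : MvPolynomial (Fin (2*n+1)) K) ∈
        ((coverIdeal K (cycleEdges n)) ^ 2).colon
          (Ideal.span {xU K (Finset.univ : Finset (Fin (2 * n + 1)))}) :=
      htop ▸ Submodule.mem_top
    have h2 := Ideal.mem_colon_span_singleton.mp h1
    rw [one_mul] at h2
    exact xV_not_mem_sq K n h2
  · rw [primeOf, Ideal.span_le]
    rintro p ⟨j, -, rfl⟩
    rw [SetLike.mem_coe, Ideal.mem_colon_span_singleton]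
    exact Xj_mul_mem hn j
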